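/- Let H be a critical 3-hypergraph with |V(H)| ≥ 5. If v ∈ V(H) has degree 2 in the primality graph 𝒫(H), then N_{𝒫(H)}(v), the set of neighbours of v in 𝒫(H), is a module of H − v. -/

import Mathlib

/-- `M` is a module of the hypergraph with vertex set `verts` and edge set `edges`. -/
def IsModule {α : Type*} [DecidableEq α] (verts : Finset α) (edges : Set (Finset α))
    (M : Finset α) : Prop :=
  M ⊆ verts ∧ ∀ e ∈ edges, (e ∩ M).Nonempty → (e \ M).Nonempty →
    ∃ m ∈ M, e ∩ M = {m} ∧ ∀ n ∈ M, (e \ {m}) ∪ {n} ∈ edges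

/-- `(verts, edges)` is a hypergraph: edges are nonempty subsets of `verts`. -/
def IsHypergraph {α : Type*} (verts : Finset α) (edges : Set (Finset α)) : Prop :=
  ∀ e ∈ edges, e ⊆ verts ∧ e.Nonempty

/-- `(verts, edges)` is a 3-hypergraph: edges are 3-element subsets of `verts`. -/
def Is3Hypergraph {α : Type*} (verts : Finset α) (edges : Set (Finset α)) : Prop :=
  ∀ e ∈ edges, e ⊆ verts ∧ e.card = 3

/-- Edges of the subhypergraph induced by `W`. -/
def induceEdges {α : Type*} (W : Finset α) (edges : Set (Finset α)) : Set (Finset α) :=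
  {e ∈ edges | e ⊆ W}

/-- A hypergraph is prime if it has at least 3 vertices and all its modules are trivial. -/
def IsPrime {α : Type*} [DecidableEq α] (verts : Finset α) (edges : Set (Finset α)) : Prop :=
  3 ≤ verts.card ∧ ∀ M, IsModule verts edges M → M = ∅ ∨ M = verts ∨ ∃ v, M = {v}

/-- A prime hypergraph is critical if removing any vertex destroys primality. -/
def IsCritical {α : Type*} [DecidableEq α] (verts : Finset α) (edges : Set (Finset α)) : Prop :=
  IsPrime verts edges ∧
    ∀ v ∈ verts, ¬ IsPrime (verts.erase v) (induceEdges (verts.erase v) edges)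

/-- Adjacency in the primality graph: `v ≠ w` and `H - {v, w}` is prime. -/
def PrimAdj {α : Type*} [DecidableEq α] (verts : Finset α) (edges : Set (Finset α))
    (v w : α) : Prop :=
  v ≠ w ∧ v ∈ verts ∧ w ∈ verts ∧
    IsPrime (verts \ {v, w}) (induceEdges (verts \ {v, w}) edges)



private lemma module_erase {α : Type*} [DecidableEq α] {W : Finset α} {edges : Set (Finset α)}
    {M : Finset α} (w : α) (h : IsModule W (induceEdges W edges) M) :
    IsModule (W.erase w) (induceEdges (W.erase w) edges) (M.erase w) := by
  obtain ⟨hMW, hmod⟩ := h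
  refine ⟨fun x hx => ?_, fun e he hne hne' => ?_⟩
  · simp only [Finset.mem_erase] at hx ⊢
    exact ⟨hx.1, hMW hx.2⟩
  · obtain ⟨heE, heW⟩ := he
    have hwe : w ∉ e := fun hwmem => (Finset.mem_erase.mp (heW hwmem)).1 rfl
    have h1 : e ∩ M.erase w = e ∩ M := by
      ext a
      simp only [Finset.mem_inter, Finset.mem_erase]
      constructor
      · rintro ⟨ha, _, hb⟩; exact ⟨ha, hb⟩
      · rintro ⟨ha, hb⟩; exact ⟨ha, fun hh => hwe (hh ▸ ha), hb⟩
    have h2 : e \ M.erase w = e \ M := by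
      ext a
      simp only [Finset.mem_sdiff, Finset.mem_erase, not_and]
      constructor
      · rintro ⟨ha, hb⟩; exact ⟨ha, fun hM => hb (fun hh => hwe (hh ▸ ha)) hM⟩
      · rintro ⟨ha, hb⟩; exact ⟨ha, fun _ => hb⟩
    rw [h1] at hne
    rw [h2] at hne'
    have heW' : e ∈ induceEdges W edges := ⟨heE, heW.trans (Finset.erase_subset _ _)⟩
    obtain ⟨m, hmM, hm, hmod'⟩ := hmod e heW' hne hne'
    have hme : m ∈ e := by
      have : m ∈ e ∩ M := by rw [hm]; exact Finset.mem_singleton_self m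
      exact (Finset.mem_inter.mp this).1
    refine ⟨m, Finset.mem_erase.mpr ⟨fun hh => hwe (hh ▸ hme), hmM⟩, by rw [h1, hm], ?_⟩
    intro n hn
    obtain ⟨hnw, hnM⟩ := Finset.mem_erase.mp hn
    obtain ⟨hf, hfW⟩ := hmod' n hnM
    refine ⟨hf, fun x hx => ?_⟩
    rcases Finset.mem_union.mp hx with hx | hx
    · exact heW (Finset.mem_sdiff.mp hx).1
    · rw [Finset.mem_singleton.mp hx]
      exact Finset.mem_erase.mpr ⟨hnw, hMW hnM⟩

theorem primality_degree_two_neighbours_module {α : Type*} [DecidableEq α]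
    (verts : Finset α) (edges : Set (Finset α)) (h3 : Is3Hypergraph verts edges)
    (hc : IsCritical verts edges) (h5 : 5 ≤ verts.card)
    (v w₁ w₂ : α) (hw : w₁ ≠ w₂)
    (h1 : PrimAdj verts edges v w₁) (h2 : PrimAdj verts edges v w₂)
    (hdeg : ∀ w, PrimAdj verts edges v w → w = w₁ ∨ w = w₂) :
    IsModule (verts.erase v) (induceEdges (verts.erase v) edges) {w₁, w₂} := by
  obtain ⟨hvw1, hv, hw1v, hp1⟩ := h1
  obtain ⟨hvw2, -, hw2v, hp2⟩ := h2
  -- non-primality of H - v gives a nontrivial module M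
  have hnp := hc.2 v hv
  have h3card : 3 ≤ (verts.erase v).card := by
    rw [Finset.card_erase_of_mem hv]; omega
  rw [IsPrime, not_and] at hnp
  have hnp' := hnp h3card
  push_neg at hnp'
  obtain ⟨M, hM, hMne, hMnt, hMns⟩ := hnp'
  have hM0 : M.card ≠ 0 := Finset.card_ne_zero.mpr hMne
  have hM1 : M.card ≠ 1 := fun hh => (Finset.card_eq_one.mp hh).elim fun x hx => hMns x hx
  have hM2 : 2 ≤ M.card := by omega
  have hMsub : M ⊆ verts.erase v := hM.1
  have hcvw : ∀ w, w ∈ verts → v ≠ w → (verts \ {v, w}).card = verts.card - 2 := by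
    intro w hwmem hne
    rw [Finset.card_sdiff_of_subset (Finset.insert_subset_iff.mpr ⟨hv, Finset.singleton_subset_iff.mpr hwmem⟩)]
    rw [Finset.card_insert_of_notMem (by simp [hne]), Finset.card_singleton]
  have key : ∀ w, w ∈ verts → v ≠ w →
      IsPrime (verts \ {v, w}) (induceEdges (verts \ {v, w}) edges) →
      M.erase w = verts \ {v, w} ∨ ∃ x, M.erase w = {x} := by
    intro w hwmem hne hp
    have hmod := module_erase w hM
    have heq : (verts.erase v).erase w = verts \ {v, w} := by
      ext a
      simp only [Finset.mem_erase, Finset.mem_sdiff, Finset.mem_insert, Finset.mem_singleton]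
      tauto
    rw [heq] at hmod
    rcases hp.2 _ hmod with hh | hh | hh
    · exfalso
      rcases (Finset.erase_eq_empty_iff M w).mp hh with rfl | rfl
      · simp at hM0
      · simp at hM1
    · exact Or.inl hh
    · exact Or.inr hh
  have k1 := key w₁ hw1v hvw1 hp1
  have k2 := key w₂ hw2v hvw2 hp2
  rcases k1 with k1 | ⟨x, hx⟩
  · -- M.erase w₁ is everything : derive contradictions
    exfalso
    have hc1 : (M.erase w₁).card = verts.card - 2 := by rw [k1, hcvw w₁ hw1v hvw1]
    have hMcard : verts.card - 2 ≤ M.card := by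
      calc verts.card - 2 = (M.erase w₁).card := hc1.symm
        _ ≤ M.card := Finset.card_le_card (Finset.erase_subset _ _)
    have hw1M : w₁ ∉ M := by
      intro hmem
      have hce : (M.erase w₁).card + 1 = M.card := Finset.card_erase_add_one hmem
      have hMc : M.card = verts.card - 1 := by omega
      have : M = verts.erase v := Finset.eq_of_subset_of_card_le hMsub
        (by rw [Finset.card_erase_of_mem hv]; omega)
      exact hMnt this
    have hMeq : M = verts \ {v, w₁} := by rw [← k1, Finset.erase_eq_of_notMem hw1M]
    have hMc : M.card = verts.card - 2 := by rw [hMeq, hcvw w₁ hw1v hvw1]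
    rcases k2 with k2 | ⟨y, hy⟩
    · have hw2M : w₂ ∈ M := by
        rw [hMeq]
        simp only [Finset.mem_sdiff, Finset.mem_insert, Finset.mem_singleton]
        exact ⟨hw2v, by push_neg; exact ⟨fun hh => hvw2 hh.symm, fun hh => hw hh.symm⟩⟩
      have hce : (M.erase w₂).card + 1 = M.card := Finset.card_erase_add_one hw2M
      have hc2 : (M.erase w₂).card = verts.card - 2 := by rw [k2, hcvw w₂ hw2v hvw2]
      omega
    · have hsub : M ⊆ insert w₂ {y} := Finset.subset_insert_iff.mpr (by rw [hy])
      have := Finset.card_le_card hsub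
      have hle : (insert w₂ ({y} : Finset α)).card ≤ 2 := by
        calc (insert w₂ ({y} : Finset α)).card ≤ ({y} : Finset α).card + 1 :=
          Finset.card_insert_le _ _
          _ = 2 := by simp
      omega
  · rcases k2 with k2 | ⟨y, hy⟩
    · exfalso
      have hsub : M ⊆ insert w₁ {x} := Finset.subset_insert_iff.mpr (by rw [hx])
      have hle1 := Finset.card_le_card hsub
      have hle : (insert w₁ ({x} : Finset α)).card ≤ 2 := by
        calc (insert w₁ ({x} : Finset α)).card ≤ ({x} : Finset α).card + 1 :=
          Finset.card_insert_le _ _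
          _ = 2 := by simp
      have hc2 : (M.erase w₂).card = verts.card - 2 := by rw [k2, hcvw w₂ hw2v hvw2]
      have := Finset.card_le_card (Finset.erase_subset w₂ M)
      omega
    · -- both singletons: M = {w₁, w₂}
      have hw1M : w₁ ∈ M := by
        by_contra hh
        rw [Finset.erase_eq_of_notMem hh] at hx
        rw [hx] at hM1
        simp at hM1
      have hw2M : w₂ ∈ M := by
        by_contra hh
        rw [Finset.erase_eq_of_notMem hh] at hy
        rw [hy] at hM1
        simp at hM1
      have hw2x : w₂ ∈ M.erase w₁ := Finset.mem_erase.mpr ⟨hw.symm, hw2M⟩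
      rw [hx, Finset.mem_singleton] at hw2x
      subst hw2x
      have hsub : M ⊆ {w₁, w₂} := Finset.subset_insert_iff.mpr (by rw [hx])
      have hsup : ({w₁, w₂} : Finset α) ⊆ M :=
        Finset.insert_subset_iff.mpr ⟨hw1M, Finset.singleton_subset_iff.mpr hw2M⟩
      have hMeq : M = {w₁, w₂} := Finset.Subset.antisymm hsub hsup
      rw [← hMeq]
      exact hM
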